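/- Let σ > 0. Consider the binary-input channel with uniform input X ∈ {0,1} whose output Y ∈ [−1,1) has conditional densities p(y|x) = f_{2ℤ,σ²}(y − x) (the ℤ/2ℤ, i.e. mod-2 BAWGN, channel). Then its mutual information I(X;Y) = ∑_{x∈{0,1}} (1/2) ∫_{−1}^{1} p(y|x) log₂[ p(y|x) / ((p(y|0)+p(y|1))/2) ] dy equals 1 + h(ℤ,σ²) − h(2ℤ,σ²); that is, C(ℤ/2ℤ, σ²) = C(2ℤ,σ²) − C(ℤ,σ²). -/

import Mathlib

open Real

/-- The `vℤ`-aliased (wrapped) Gaussian density with noise variance `σ2`. -/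
noncomputable def aliasedGaussian (v σ2 : ℝ) (x : ℝ) : ℝ :=
  ∑' j : ℤ, (Real.sqrt (2 * Real.pi * σ2))⁻¹ * Real.exp (-(x + v * (j : ℝ)) ^ 2 / (2 * σ2))

/-- The differential entropy (in bits) of the `vℤ`-aliased Gaussian noise. -/
noncomputable def aliasedEntropy (v σ2 : ℝ) : ℝ :=
  -∫ x in (-v / 2)..(v / 2), aliasedGaussian v σ2 x * Real.logb 2 (aliasedGaussian v σ2 x)

open MeasureTheory


lemma summable_exp_neg_sq_int {b : ℝ} (hb : 0 < b) :
    Summable (fun j : ℤ => Real.exp (-b * (j : ℝ) ^ 2)) := by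
  have hnat : Summable (fun n : ℕ => Real.exp (-b * (n : ℝ) ^ 2)) := by
    refine Summable.of_nonneg_of_le (fun n => (Real.exp_pos _).le) (fun n => ?_)
      (summable_geometric_of_lt_one (Real.exp_pos (-b)).le (Real.exp_lt_one_iff.2 (by linarith)))
    rw [← Real.exp_nat_mul]
    apply Real.exp_le_exp.2
    have : (n : ℝ) ≤ (n : ℝ) ^ 2 := by exact_mod_cast Nat.le_self_pow two_ne_zero n
    nlinarith
  apply Summable.of_nat_of_neg <;> simpa using hnat

lemma exp_term_bound {σ2 : ℝ} (hσ2 : 0 < σ2) (x R t : ℝ) (hx : |x| ≤ R) :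
    Real.exp (-(x + t) ^ 2 / (2 * σ2)) ≤
      Real.exp (R ^ 2 / (2 * σ2)) * Real.exp (-(t ^ 2) / (4 * σ2)) := by
  rw [← Real.exp_add]
  apply Real.exp_le_exp.2
  rw [← sub_nonneg]
  have hkey : 0 ≤ 2 * R ^ 2 - t ^ 2 + 2 * (x + t) ^ 2 := by
    have hx2 : x ^ 2 ≤ R ^ 2 := by nlinarith [abs_nonneg x, sq_abs x, neg_abs_le x, le_abs_self x]
    nlinarith [sq_nonneg ((x + t) + x)]
  have heq : R ^ 2 / (2 * σ2) + -(t ^ 2) / (4 * σ2) - -(x + t) ^ 2 / (2 * σ2)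
      = (2 * R ^ 2 - t ^ 2 + 2 * (x + t) ^ 2) / (4 * σ2) := by ring
  rw [heq]
  positivity

lemma summable_aliased {v σ2 : ℝ} (hv : 0 < v) (hσ2 : 0 < σ2) (x : ℝ) :
    Summable (fun j : ℤ =>
      (Real.sqrt (2 * Real.pi * σ2))⁻¹ * Real.exp (-(x + v * (j : ℝ)) ^ 2 / (2 * σ2))) := by
  apply Summable.mul_left
  refine Summable.of_nonneg_of_le (fun j => (Real.exp_pos _).le) (fun j => ?_)
    ((summable_exp_neg_sq_int (b := v ^ 2 / (4 * σ2)) (by positivity)).mul_left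
      (Real.exp (|x| ^ 2 / (2 * σ2))))
  have := exp_term_bound hσ2 x |x| (v * j) le_rfl
  convert this using 3
  ring


lemma tsum_int_even_add_odd {a : ℤ → ℝ} (ha : Summable a) :
    ∑' j : ℤ, a j = (∑' j : ℤ, a (2 * j)) + ∑' j : ℤ, a (2 * j + 1) := by
  have hinj1 : Function.Injective (fun j : ℤ => 2 * j) := fun x y h => by dsimp at h; omega
  have hinj2 : Function.Injective (fun j : ℤ => 2 * j + 1) := fun x y h => by dsimp at h; omega
  have h1 : Summable (fun j : ℤ => a (2 * j)) := ha.comp_injective hinj1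
  have h2 : Summable (fun j : ℤ => a (2 * j + 1)) := ha.comp_injective hinj2
  have hcompl : (Set.range (fun j : ℤ => 2 * j))ᶜ = Set.range (fun j : ℤ => 2 * j + 1) := by
    ext x
    simp only [Set.mem_compl_iff, Set.mem_range, not_exists]
    constructor
    · intro h
      rcases Int.even_or_odd x with ⟨k, hk⟩ | ⟨k, hk⟩
      · exact absurd (by omega : 2 * k = x) (h k)
      · exact ⟨k, by omega⟩
    · rintro ⟨k, hk⟩ m hm
      omega
  have e1 : HasSum (fun x : Set.range (fun j : ℤ => 2 * j) => a x) (∑' j : ℤ, a (2 * j)) := by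
    rw [← (Equiv.ofInjective _ hinj1).hasSum_iff]
    exact h1.hasSum
  have e2 : HasSum (fun x : ↥(Set.range (fun j : ℤ => 2 * j))ᶜ => a x)
      (∑' j : ℤ, a (2 * j + 1)) := by
    rw [hcompl, ← (Equiv.ofInjective _ hinj2).hasSum_iff]
    exact h2.hasSum
  exact ha.hasSum.unique (e1.add_compl e2) ▸ rfl

lemma aliasedGaussian_pos {v σ2 : ℝ} (hv : 0 < v) (hσ2 : 0 < σ2) (x : ℝ) :
    0 < aliasedGaussian v σ2 x := by
  have hA : 0 < (Real.sqrt (2 * Real.pi * σ2))⁻¹ := by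
    have : 0 < Real.sqrt (2 * Real.pi * σ2) := Real.sqrt_pos.2 (by positivity)
    positivity
  exact Summable.tsum_pos (summable_aliased hv hσ2 x)
    (fun j => by positivity) 0 (by positivity)

lemma aliasedGaussian_continuous {v σ2 : ℝ} (hv : 0 < v) (hσ2 : 0 < σ2) :
    Continuous (aliasedGaussian v σ2) := by
  rw [continuous_iff_continuousAt]
  intro x0
  set R : ℝ := |x0| + 1 with hR
  have hx0R : |x0| < R := by simp [hR]
  have hball : Metric.ball 0 R ∈ nhds x0 := by
    apply Metric.isOpen_ball.mem_nhds
    simpa [Real.dist_eq] using hx0R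
  apply ContinuousOn.continuousAt _ hball
  have : aliasedGaussian v σ2 = fun x => ∑' j : ℤ,
      (Real.sqrt (2 * Real.pi * σ2))⁻¹ * Real.exp (-(x + v * (j : ℝ)) ^ 2 / (2 * σ2)) := rfl
  rw [this]
  apply continuousOn_tsum (u := fun j : ℤ => (Real.sqrt (2 * Real.pi * σ2))⁻¹ *
      (Real.exp (R ^ 2 / (2 * σ2)) * Real.exp (-(v ^ 2 / (4 * σ2)) * (j : ℝ) ^ 2)))
  · intro j
    exact (Continuous.continuousOn (by continuity))
  · exact ((summable_exp_neg_sq_int (by positivity)).mul_left _).mul_left _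
  · intro j x hx
    have hxR : |x| ≤ R := by
      have := mem_ball_iff_norm.1 hx
      rw [sub_zero] at this
      exact le_of_lt this
    have hA : 0 ≤ (Real.sqrt (2 * Real.pi * σ2))⁻¹ := by positivity
    rw [norm_mul, Real.norm_eq_abs, Real.norm_eq_abs, abs_of_nonneg hA,
      abs_of_nonneg (Real.exp_pos _).le]
    apply mul_le_mul_of_nonneg_left _ hA
    have := exp_term_bound hσ2 x R (v * j) hxR
    convert this using 3
    · rfl
    · ring

lemma aliasedGaussian_periodic {v σ2 : ℝ} : Function.Periodic (aliasedGaussian v σ2) v := by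
  intro x
  unfold aliasedGaussian
  have := (Equiv.addRight (1 : ℤ)).tsum_eq (fun j : ℤ =>
    (Real.sqrt (2 * Real.pi * σ2))⁻¹ * Real.exp (-(x + v * (j : ℝ)) ^ 2 / (2 * σ2)))
  rw [← this]
  congr 1
  funext j
  simp only [Equiv.coe_addRight]
  push_cast
  ring_nf

lemma aliasedGaussian_one_eq {σ2 : ℝ} (hσ2 : 0 < σ2) (x : ℝ) :
    aliasedGaussian 1 σ2 x = aliasedGaussian 2 σ2 x + aliasedGaussian 2 σ2 (x + 1) := by
  unfold aliasedGaussian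
  rw [tsum_int_even_add_odd (by simpa using summable_aliased one_pos hσ2 x)]
  congr 1
  · congr 1; funext j; push_cast; ring_nf
  · congr 1; funext j; push_cast; ring_nf

lemma aliasedGaussian_one_integral {σ2 : ℝ} (hσ2 : 0 < σ2) :
    ∫ x in (-(1:ℝ)/2)..(1/2), aliasedGaussian 1 σ2 x = 1 := by
  set A : ℝ := (Real.sqrt (2 * Real.pi * σ2))⁻¹ with hA
  have hA0 : 0 < Real.sqrt (2 * Real.pi * σ2) := Real.sqrt_pos.2 (by positivity)
  have hApos : 0 < A := by positivity
  set g : ℝ → ℝ := fun x => Real.exp (-(1 / (2 * σ2)) * x ^ 2) with hg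
  have hgform : ∀ x : ℝ, Real.exp (-x ^ 2 / (2 * σ2)) = g x := by
    intro x; rw [hg]; congr 1; ring
  have hgint : Integrable g := integrable_exp_neg_mul_sq (by positivity)
  -- the summable bound
  set u : ℤ → ℝ := fun j => A * (Real.exp (1 ^ 2 / (2 * σ2)) *
      Real.exp (-((j : ℝ) ^ 2) / (4 * σ2))) with hu
  have husum : Summable u := by
    have : Summable (fun j : ℤ => Real.exp (-(1 / (4 * σ2)) * (j : ℝ) ^ 2)) :=
      summable_exp_neg_sq_int (by positivity)
    apply Summable.mul_left
    apply Summable.mul_left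
    convert this using 2 with j
    · rfl
    · ring
  have hubd : ∀ (j : ℤ) (x : ℝ), x ∈ Set.Ioc (-(1:ℝ)/2) (1/2) →
      A * Real.exp (-(x + 1 * (j : ℝ)) ^ 2 / (2 * σ2)) ≤ u j := by
    intro j x hx
    rw [hu]
    apply mul_le_mul_of_nonneg_left _ hApos.le
    rw [one_mul]
    apply exp_term_bound hσ2 x 1 (j : ℝ)
    rw [abs_le]
    constructor <;> [linarith [hx.1]; linarith [hx.2]]
  have hmeas : ∀ j : ℤ, AEStronglyMeasurable
      (fun x : ℝ => A * Real.exp (-(x + 1 * (j : ℝ)) ^ 2 / (2 * σ2)))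
      (volume.restrict (Set.Ioc (-(1:ℝ)/2) (1/2))) := by
    intro j
    exact (Continuous.aestronglyMeasurable (by continuity))
  -- step 1: interchange
  rw [intervalIntegral.integral_of_le (by norm_num : (-(1:ℝ)/2) ≤ 1/2)]
  unfold aliasedGaussian
  rw [MeasureTheory.integral_tsum hmeas ?hfin]
  case hfin =>
    have hle : ∀ j : ℤ,
        (∫⁻ x in Set.Ioc (-(1:ℝ)/2) (1/2), ‖A * Real.exp (-(x + 1 * (j:ℝ)) ^ 2 / (2 * σ2))‖₊)
          ≤ ENNReal.ofReal (u j) := by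
      intro j
      have : (∫⁻ x in Set.Ioc (-(1:ℝ)/2) (1/2), ‖A * Real.exp (-(x + 1 * (j:ℝ)) ^ 2 / (2 * σ2))‖₊)
          ≤ ∫⁻ _ in Set.Ioc (-(1:ℝ)/2) (1/2), ENNReal.ofReal (u j) := by
        apply MeasureTheory.setLIntegral_mono' measurableSet_Ioc
        intro x hx
        rw [← enorm_eq_nnnorm, ← ofReal_norm]
        apply ENNReal.ofReal_le_ofReal
        rw [Real.norm_eq_abs, abs_of_nonneg (by positivity)]
        exact hubd j x hx
      apply this.trans
      rw [MeasureTheory.lintegral_const, Measure.restrict_apply MeasurableSet.univ,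
        Set.univ_inter, Real.volume_Ioc]
      rw [show ((1:ℝ)/2 - -(1:ℝ)/2) = 1 by norm_num]
      simp
    apply ne_top_of_le_ne_top _ (ENNReal.tsum_le_tsum hle)
    rw [← ENNReal.ofReal_tsum_of_nonneg (fun j => by rw [hu]; positivity) husum]
    exact ENNReal.ofReal_ne_top
  -- step 2: each term
  have hterm : ∀ j : ℤ,
      (∫ x in Set.Ioc (-(1:ℝ)/2) (1/2), A * Real.exp (-(x + 1 * (j:ℝ)) ^ 2 / (2 * σ2)))
        = A * ∫ x in Set.Ioc ((j:ℝ) - 1/2) ((j:ℝ) + 1/2), g x := by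
    intro j
    rw [MeasureTheory.integral_const_mul]
    congr 1
    rw [← intervalIntegral.integral_of_le (by norm_num : (-(1:ℝ)/2) ≤ 1/2)]
    have : ∀ x : ℝ, Real.exp (-(x + 1 * (j:ℝ)) ^ 2 / (2 * σ2)) = g (x + (j:ℝ)) := by
      intro x; rw [← hgform]; ring_nf
    simp_rw [this]
    rw [intervalIntegral.integral_comp_add_right (fun x => g x) (j:ℝ)]
    rw [intervalIntegral.integral_of_le (by linarith : (-(1:ℝ)/2 + j) ≤ 1/2 + j)]
    congr 1 <;> ring
  simp_rw [hterm]
  rw [tsum_mul_left]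
  -- step 3: sum of translates equals full integral
  have hdisj : Pairwise (Function.onFun Disjoint
      (fun j : ℤ => Set.Ioc ((j:ℝ) - 1/2) ((j:ℝ) + 1/2))) := by
    intro i j hij
    rw [Function.onFun, Set.disjoint_left]
    intro x hxi hxj
    have h1 := hxi.1; have h2 := hxi.2; have h3 := hxj.1; have h4 := hxj.2
    have : i = j := by
      have hij1 : (i:ℝ) < j + 1 := by linarith
      have hij2 : (j:ℝ) < i + 1 := by linarith
      have : i < j + 1 := by exact_mod_cast hij1
      have : j < i + 1 := by exact_mod_cast hij2
      omega
    exact hij this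
  have hunion : (⋃ j : ℤ, Set.Ioc ((j:ℝ) - 1/2) ((j:ℝ) + 1/2)) = Set.univ := by
    rw [Set.eq_univ_iff_forall]
    intro x
    rw [Set.mem_iUnion]
    refine ⟨⌈x - 1/2⌉, ?_⟩
    have h1 := Int.ceil_lt_add_one (x - 1/2)
    have h2 := Int.le_ceil (x - 1/2)
    constructor <;> [linarith; linarith]
  have := MeasureTheory.integral_iUnion (μ := volume)
    (fun j : ℤ => measurableSet_Ioc) hdisj
    (f := g) (by rw [hunion]; exact hgint.integrableOn)
  rw [← this, hunion]
  have : ∫ x in Set.univ, g x = ∫ x : ℝ, g x := by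
    rw [MeasureTheory.setIntegral_univ]
  rw [this, hg, integral_gaussian]
  rw [show Real.pi / (1 / (2 * σ2)) = 2 * Real.pi * σ2 by field_simp]
  rw [hA]
  exact inv_mul_cancel₀ (ne_of_gt hA0)

lemma mod2_aux {σ2 : ℝ} (hσ2 : 0 < σ2) :
    (∑ x ∈ ({0, 1} : Finset ℝ), (1 / 2 : ℝ) *
        ∫ y in (-1 : ℝ)..1,
          aliasedGaussian 2 σ2 (y - x) *
            Real.logb 2 (aliasedGaussian 2 σ2 (y - x) /
              ((aliasedGaussian 2 σ2 (y - 0) + aliasedGaussian 2 σ2 (y - 1)) / 2)))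
      = 1 + aliasedEntropy 1 σ2 - aliasedEntropy 2 σ2 := by
  have h2 : (0:ℝ) < 2 := two_pos
  set f₂ : ℝ → ℝ := aliasedGaussian 2 σ2 with hf2
  set f₁ : ℝ → ℝ := aliasedGaussian 1 σ2 with hf1
  have hp2 : ∀ y, 0 < f₂ y := aliasedGaussian_pos h2 hσ2
  have hp1 : ∀ y, 0 < f₁ y := aliasedGaussian_pos one_pos hσ2
  have hc2 : Continuous f₂ := aliasedGaussian_continuous h2 hσ2
  have hc1 : Continuous f₁ := aliasedGaussian_continuous one_pos hσ2
  have hper2 : Function.Periodic f₂ 2 := aliasedGaussian_periodic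
  have hper1 : Function.Periodic f₁ 1 := aliasedGaussian_periodic
  have hsplit : ∀ y, f₁ y = f₂ y + f₂ (y + 1) := aliasedGaussian_one_eq hσ2
  -- continuity of logb compositions
  have hL2 : Continuous (fun y => Real.logb 2 (f₂ y)) :=
    (hc2.log (fun y => (hp2 y).ne')).div_const _
  have hL1 : Continuous (fun y => Real.logb 2 (f₁ y)) :=
    (hc1.log (fun y => (hp1 y).ne')).div_const _
  -- logb identity
  have hlogb : ∀ a b : ℝ, 0 < a → 0 < b →
      Real.logb 2 (a / (b / 2)) = Real.logb 2 a - Real.logb 2 b + 1 := by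
    intro a b ha hb
    rw [Real.logb_div ha.ne' (by positivity), Real.logb_div hb.ne' two_ne_zero,
      Real.logb_self_eq_one (by norm_num)]
    ring
  set G : ℝ → ℝ := fun t => f₂ t * (Real.logb 2 (f₂ t) - Real.logb 2 (f₁ t) + 1) with hGdef
  have hGc : Continuous G := hc2.mul ((hL2.sub hL1).add continuous_const)
  have hf1_shift : ∀ t : ℝ, f₁ (t + 1) = f₁ t := fun t => hper1 t
  have hf1_two : ∀ t : ℝ, f₁ (t + 2) = f₁ t := by
    intro t
    rw [show t + 2 = (t + 1) + 1 by ring, hf1_shift, hf1_shift]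
  have hGper : Function.Periodic G 2 := by
    intro t
    simp only [hGdef]
    rw [hper2 t, hf1_two]
  -- Step A/B: rewrite the sum as ∫ G + shifted
  rw [Finset.sum_pair (by norm_num : (0:ℝ) ≠ 1)]
  have hI0 : (∫ y in (-1 : ℝ)..1, f₂ (y - 0) *
      Real.logb 2 (f₂ (y - 0) / ((f₂ (y - 0) + f₂ (y - 1)) / 2))) = ∫ y in (-1:ℝ)..1, G y := by
    apply intervalIntegral.integral_congr
    intro y _
    simp only [sub_zero, hGdef]
    have hshift : f₂ (y - 1) = f₂ (y + 1) := by
      rw [show y + 1 = (y - 1) + 2 by ring, hper2]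
    rw [hshift, ← hsplit y, hlogb _ _ (hp2 y) (hp1 y)]
  have hI1 : (∫ y in (-1 : ℝ)..1, f₂ (y - 1) *
      Real.logb 2 (f₂ (y - 1) / ((f₂ (y - 0) + f₂ (y - 1)) / 2))) = ∫ y in (-1:ℝ)..1, G y := by
    have step1 : (∫ y in (-1 : ℝ)..1, f₂ (y - 1) *
        Real.logb 2 (f₂ (y - 1) / ((f₂ (y - 0) + f₂ (y - 1)) / 2)))
        = ∫ y in (-1:ℝ)..1, G (y - 1) := by
      apply intervalIntegral.integral_congr
      intro y _
      simp only [sub_zero, hGdef]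
      have hden : f₂ y + f₂ (y - 1) = f₁ (y - 1) := by
        rw [hsplit (y - 1), show y - 1 + 1 = y by ring]
        ring
      rw [hden, hlogb _ _ (hp2 (y - 1)) (hp1 (y - 1))]
    rw [step1, intervalIntegral.integral_comp_sub_right G 1]
    have := hGper.intervalIntegral_add_eq (-2) (-1)
    norm_num at this ⊢
    convert this using 2 <;> norm_num
  rw [hI0, hI1, ← add_mul, show (1:ℝ)/2 + 1/2 = 1 by norm_num, one_mul]
  -- Step C: expand G
  have hint1 : IntervalIntegrable (fun y => f₂ y * Real.logb 2 (f₂ y)) volume (-1) 1 :=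
    (hc2.mul hL2).intervalIntegrable _ _
  have hint2 : IntervalIntegrable (fun y => f₂ y * Real.logb 2 (f₁ y)) volume (-1) 1 :=
    (hc2.mul hL1).intervalIntegrable _ _
  have hint3 : IntervalIntegrable f₂ volume (-1) 1 := hc2.intervalIntegrable _ _
  have hexp : (∫ y in (-1:ℝ)..1, G y)
      = (∫ y in (-1:ℝ)..1, f₂ y * Real.logb 2 (f₂ y))
        - (∫ y in (-1:ℝ)..1, f₂ y * Real.logb 2 (f₁ y))
        + ∫ y in (-1:ℝ)..1, f₂ y := by
    rw [← intervalIntegral.integral_sub hint1 hint2,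
      ← intervalIntegral.integral_add (hint1.sub hint2) hint3]
    apply intervalIntegral.integral_congr
    intro y _
    simp only [hGdef]
    ring
  rw [hexp]
  -- Step D1
  have hD1 : (∫ y in (-1:ℝ)..1, f₂ y * Real.logb 2 (f₂ y)) = -aliasedEntropy 2 σ2 := by
    rw [aliasedEntropy, neg_neg]
    norm_num
    rfl
  -- helpers for period-2 shifts
  have hshift2 : ∀ K : ℝ → ℝ, Function.Periodic K 2 →
      (∫ y in (0:ℝ)..2, K y) = ∫ y in (-1:ℝ)..1, K y := by
    intro K hK
    have := hK.intervalIntegral_add_eq 0 (-1)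
    norm_num at this ⊢
    convert this using 2 <;> norm_num
  -- ∫_{-1}^{1} f₁ ⋆ = 2 ∫_{-1}^{1} f₂ ⋆ for ⋆-weighted (with weight periodic 1)
  have hdouble : ∀ w : ℝ → ℝ, Continuous w → (∀ t, w (t + 1) = w t) →
      (∫ y in (-1:ℝ)..1, f₁ y * w y) = 2 * ∫ y in (-1:ℝ)..1, f₂ y * w y := by
    intro w hw hwper
    have hKper : Function.Periodic (fun t => f₂ t * w t) 2 := by
      intro t
      simp only
      rw [hper2 t, show t + 2 = (t + 1) + 1 by ring, hwper, hwper]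
    have step : (∫ y in (-1:ℝ)..1, f₂ (y + 1) * w y)
        = ∫ y in (-1:ℝ)..1, f₂ y * w y := by
      have e1 : (∫ y in (-1:ℝ)..1, f₂ (y + 1) * w y)
          = ∫ y in (-1:ℝ)..1, (fun t => f₂ t * w t) (y + 1) := by
        apply intervalIntegral.integral_congr
        intro y _
        simp only
        rw [hwper y]
      rw [e1, intervalIntegral.integral_comp_add_right (fun t => f₂ t * w t) 1]
      have := hshift2 _ hKper
      norm_num at this ⊢
      convert this using 2 <;> norm_num
    have expand : (∫ y in (-1:ℝ)..1, f₁ y * w y)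
        = (∫ y in (-1:ℝ)..1, f₂ y * w y) + ∫ y in (-1:ℝ)..1, f₂ (y + 1) * w y := by
      have hcont : Continuous (fun y : ℝ => f₂ (y + 1) * w y) := by
        apply Continuous.mul _ hw
        exact hc2.comp (by continuity)
      rw [← intervalIntegral.integral_add (f := fun y => f₂ y * w y) ((hc2.mul hw).intervalIntegrable _ _)
        (hcont.intervalIntegrable _ _)]
      apply intervalIntegral.integral_congr
      intro y _
      simp only
      rw [hsplit y]
      ring
    rw [expand, step]
    ring
  -- ∫_{-1}^{1} f₁ ⋆ = 2 ∫_{-1/2}^{1/2} f₁ ⋆ (period 1)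
  have hfold : ∀ K : ℝ → ℝ, Continuous K → Function.Periodic K 1 →
      (∫ y in (-1:ℝ)..1, K y) = 2 * ∫ y in (-(1:ℝ)/2)..(1/2), K y := by
    intro K hK hKper
    have hsplit01 : (∫ y in (-1:ℝ)..1, K y)
        = (∫ y in (-1:ℝ)..0, K y) + ∫ y in (0:ℝ)..1, K y :=
      (intervalIntegral.integral_add_adjacent_intervals
        (hK.intervalIntegrable _ _) (hK.intervalIntegrable _ _)).symm
    have e1 : (∫ y in (-1:ℝ)..0, K y) = ∫ y in (-(1:ℝ)/2)..(1/2), K y := by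
      have := hKper.intervalIntegral_add_eq (-1) (-(1:ℝ)/2)
      norm_num at this ⊢
      convert this using 2 <;> norm_num
    have e2 : (∫ y in (0:ℝ)..1, K y) = ∫ y in (-(1:ℝ)/2)..(1/2), K y := by
      have := hKper.intervalIntegral_add_eq 0 (-(1:ℝ)/2)
      norm_num at this ⊢
      convert this using 2 <;> norm_num
    rw [hsplit01, e1, e2]
    ring
  -- Step D2
  have hD2 : (∫ y in (-1:ℝ)..1, f₂ y * Real.logb 2 (f₁ y)) = -aliasedEntropy 1 σ2 := by
    have h1 := hdouble (fun y => Real.logb 2 (f₁ y)) hL1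
      (fun t => by rw [hf1_shift])
    have hKper : Function.Periodic (fun y => f₁ y * Real.logb 2 (f₁ y)) 1 := by
      intro t
      simp only
      rw [hf1_shift]
    have h2' := hfold (fun y => f₁ y * Real.logb 2 (f₁ y)) (hc1.mul hL1) hKper
    have hE : aliasedEntropy 1 σ2
        = -∫ x in (-(1:ℝ)/2)..(1/2), f₁ x * Real.logb 2 (f₁ x) := by
      rw [aliasedEntropy]
    have : (∫ y in (-1:ℝ)..1, f₁ y * Real.logb 2 (f₁ y))
        = 2 * ∫ y in (-1:ℝ)..1, f₂ y * Real.logb 2 (f₁ y) := h1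
    rw [h2'] at this
    rw [hE]
    linarith
  -- Step D3
  have hD3 : (∫ y in (-1:ℝ)..1, f₂ y) = 1 := by
    have h1 := hdouble (fun _ => (1:ℝ)) continuous_const (fun t => rfl)
    simp only [mul_one] at h1
    have h2' := hfold f₁ hc1 hper1
    rw [h2', aliasedGaussian_one_integral hσ2] at h1
    linarith
  rw [hD1, hD2, hD3]
  ring

/-- the mutual information of the ℤ/2ℤ (mod-2 BAWGN) channel with
uniform binary input, transition densities `p(y|x) = f_{2ℤ,σ²}(y − x)` for
`x ∈ {0,1}`, equals `1 + h(ℤ,σ²) − h(2ℤ,σ²)`,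
i.e. `C(ℤ/2ℤ,σ²) = C(2ℤ,σ²) − C(ℤ,σ²)`. -/
theorem mod2_channel_capacity (σ : ℝ) (hσ : 0 < σ) :
    (∑ x ∈ ({0, 1} : Finset ℝ), (1 / 2 : ℝ) *
        ∫ y in (-1 : ℝ)..1,
          aliasedGaussian 2 (σ ^ 2) (y - x) *
            Real.logb 2 (aliasedGaussian 2 (σ ^ 2) (y - x) /
              ((aliasedGaussian 2 (σ ^ 2) (y - 0) + aliasedGaussian 2 (σ ^ 2) (y - 1)) / 2)))
      = 1 + aliasedEntropy 1 (σ ^ 2) - aliasedEntropy 2 (σ ^ 2) := by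
  exact mod2_aux (by positivity)
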